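/- arXiv:2503.19268 — 8 statements merged into one kernel-verified Lean document; each statement's English description precedes it below -/
import Mathlib

section
/- If f : Finset U → ℝ is monotone (f(x) ≤ f(y) whenever x ⊆ y), then the inverse loss function ℓ^f(x,y) := min{|x \ s| : s ⊆ x, f(s) ≤ y} has sensitivity 1 in its first argument: for all finite sets x, x' and all y ∈ ℝ, |ℓ^f(x,y) − ℓ^f(x',y)| ≤ |x \ x'| + |x' \ x|. -/
variable {U : Type*} [DecidableEq U]

/-- Inverse loss `ℓ^f(x,y) = min{|x \ s| : s ⊆ x, f s ≤ y}`, `⊤` if no such `s`. -/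
noncomputable def invLoss (f : Finset U → ℝ) (x : Finset U) (y : ℝ) : ℕ∞ :=
  sInf {n : ℕ∞ | ∃ s ⊆ x, f s ≤ y ∧ ((x \ s).card : ℕ∞) = n}

lemma invLoss_aux (f : Finset U → ℝ)
    (hmono : ∀ a b : Finset U, a ⊆ b → f a ≤ f b)
    (x x' : Finset U) (y : ℝ) :
    invLoss f x y ≤ invLoss f x' y + (((x \ x').card : ℕ) : ℕ∞) := by
  rcases Set.eq_empty_or_nonempty
      {n : ℕ∞ | ∃ s ⊆ x', f s ≤ y ∧ (((x' \ s).card : ℕ∞)) = n} with h | h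
  · simp only [invLoss]; rw [h, sInf_empty, top_add]
    exact le_top
  · obtain ⟨s, hs, hfs, hcard⟩ := csInf_mem h
    have hsub : x \ (s ∩ x) = x \ s := by
      ext a; simp (config := {contextual := true}) [Finset.mem_sdiff]
    have hcard2 : (x \ s).card ≤ (x' \ s).card + (x \ x').card := by
      calc (x \ s).card ≤ ((x' \ s) ∪ (x \ x')).card := by
            apply Finset.card_le_card
            intro a ha
            simp only [Finset.mem_sdiff] at ha
            by_cases hx' : a ∈ x' <;> simp [Finset.mem_union, Finset.mem_sdiff, ha.1, ha.2, hx']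
        _ ≤ (x' \ s).card + (x \ x').card := Finset.card_union_le _ _
    calc invLoss f x y ≤ (((x \ (s ∩ x)).card : ℕ) : ℕ∞) := by
          apply sInf_le
          exact ⟨s ∩ x, Finset.inter_subset_right,
            le_trans (hmono _ _ Finset.inter_subset_left) hfs, rfl⟩
      _ ≤ invLoss f x' y + (((x \ x').card : ℕ) : ℕ∞) := by
          rw [invLoss, ← hcard, hsub, ← Nat.cast_add, Nat.cast_le]
          exact hcard2

/-- For monotone `f`, the inverse loss has sensitivity 1 in its first argument:
`|ℓ^f(x,y) − ℓ^f(x',y)| ≤ |x \ x'| + |x' \ x|`, stated as the two one-sided inequalities. -/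
theorem invLoss_sensitivity (f : Finset U → ℝ)
    (hmono : ∀ a b : Finset U, a ⊆ b → f a ≤ f b)
    (x x' : Finset U) (y : ℝ) :
    invLoss f x y ≤ invLoss f x' y + (((x \ x').card + (x' \ x).card : ℕ) : ℕ∞) ∧
    invLoss f x' y ≤ invLoss f x y + (((x \ x').card + (x' \ x).card : ℕ) : ℕ∞) := by
  constructor
  · refine le_trans (invLoss_aux f hmono x x' y) ?_
    exact add_le_add le_rfl (by exact_mod_cast Nat.le_add_right _ _)
  · refine le_trans (invLoss_aux f hmono x' x y) ?_
    exact add_le_add le_rfl (by exact_mod_cast Nat.le_add_left _ _)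
end

section
/- Claim II in the inverse-loss sensitivity proof: for any function f (not necessarily monotone), if x'' ⊆ x, then ℓ^f(x, y) ≤ ℓ^f(x'', y) + |x \ x''| for all y. -/
variable {U : Type*} [DecidableEq U]

/-- Claim II: for any `f`, if `x'' ⊆ x` then `ℓ^f(x, y) ≤ ℓ^f(x'', y) + |x \ x''|`. -/
theorem invLoss_superset (f : Finset U → ℝ)
    (x'' x : Finset U) (hsub : x'' ⊆ x) (y : ℝ) :
    invLoss f x y ≤ invLoss f x'' y + (((x \ x'').card : ℕ) : ℕ∞) := by
  by_cases hne : {n : ℕ∞ | ∃ s ⊆ x'', f s ≤ y ∧ ((x'' \ s).card : ℕ∞) = n}.Nonempty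
  · have hmem := csInf_mem hne
    obtain ⟨s, hs, hf, hn⟩ := hmem
    have hsx : s ⊆ x := hs.trans hsub
    have hcard : (x \ s).card = (x'' \ s).card + (x \ x'').card := by
      have h1 : (x \ s).card = x.card - s.card := Finset.card_sdiff_of_subset hsx
      have h2 : (x'' \ s).card = x''.card - s.card := Finset.card_sdiff_of_subset hs
      have h3 : (x \ x'').card = x.card - x''.card := Finset.card_sdiff_of_subset hsub
      have h4 : s.card ≤ x''.card := Finset.card_le_card hs
      have h5 : x''.card ≤ x.card := Finset.card_le_card hsub
      omega
    calc invLoss f x y ≤ ((x \ s).card : ℕ∞) :=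
          csInf_le (OrderBot.bddBelow _) ⟨s, hsx, hf, rfl⟩
      _ = ((x'' \ s).card : ℕ∞) + ((x \ x'').card : ℕ∞) := by
          rw [hcard]; push_cast; ring
      _ ≤ invLoss f x'' y + ((x \ x'').card : ℕ∞) := by
          rw [invLoss, ← hn]
  · have : invLoss f x'' y = ⊤ := by
      rw [invLoss, Set.not_nonempty_iff_eq_empty.mp hne, sInf_empty]
    rw [this, top_add]
    exact le_top
end

section
/- If f : Finset U → ℝ is 1-Lipschitz on a down neighborhood DN_τ(x) (|f(u) − f(v)| ≤ 1 for any neighboring u, v in DN_τ(x)), then the conditional monotonization g(x) = (f(x) + |x|)/2 is 1-Lipschitz and monotone on DN_τ(x). -/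
variable {U : Type*} [DecidableEq U]

/-- Two finite sets are neighbors if one is obtained from the other by removing one element. -/
def Adj (u v : Finset U) : Prop :=
  (v ⊆ u ∧ u.card = v.card + 1) ∨ (u ⊆ v ∧ v.card = u.card + 1)

/-- The `τ`-down neighborhood of `x`. -/
def DN (τ : ℕ) (x : Finset U) : Set (Finset U) := {z | z ⊆ x ∧ (x \ z).card ≤ τ}

/-- `f` is `c`-Lipschitz on `D`: neighboring sets in `D` have values within `c`. -/
def LipOn (f : Finset U → ℝ) (c : ℝ) (D : Set (Finset U)) : Prop :=
  ∀ u ∈ D, ∀ v ∈ D, Adj u v → |f u - f v| ≤ c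

/-- If `f` is 1-Lipschitz on `DN τ x`, then the conditional monotonization
`g z = (f z + |z|)/2` is 1-Lipschitz and monotone on `DN τ x`. -/
theorem cmon_lipschitz_monotone (f : Finset U → ℝ) (τ : ℕ) (x : Finset U)
    (hf : LipOn f 1 (DN τ x)) :
    LipOn (fun z => (f z + z.card) / 2) 1 (DN τ x) ∧
    (∀ u ∈ DN τ x, ∀ v ∈ DN τ x, u ⊆ v →
      (f u + u.card) / 2 ≤ (f v + v.card) / 2) := by
  have hmono : ∀ n : ℕ, ∀ u ∈ DN τ x, ∀ v ∈ DN τ x, u ⊆ v → (v \ u).card = n →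
      f u + u.card ≤ f v + v.card := by
    intro n
    induction n with
    | zero =>
      intro u hu v hv huv hc
      have : v = u := by
        have := Finset.card_eq_zero.mp hc
        have : v ⊆ u := fun a ha => by
          by_contra h
          exact absurd (Finset.mem_sdiff.mpr ⟨ha, h⟩) (by simp [this])
        exact Finset.Subset.antisymm this huv
      simp [this]
    | succ n ih =>
      intro u hu v hv huv hc
      have hne : (v \ u).Nonempty := Finset.card_pos.mp (by omega)
      obtain ⟨a, ha⟩ := hne
      have hav : a ∈ v := (Finset.mem_sdiff.mp ha).1
      have hau : a ∉ u := (Finset.mem_sdiff.mp ha).2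
      set w := insert a u with hw
      have hwv : w ⊆ v := Finset.insert_subset hav huv
      have hwx : w ⊆ x := hwv.trans hv.1
      have hwDN : w ∈ DN τ x :=
        ⟨hwx, le_trans (Finset.card_le_card (Finset.sdiff_subset_sdiff le_rfl
          (Finset.subset_insert a u))) hu.2⟩
      have hcardw : w.card = u.card + 1 := Finset.card_insert_of_notMem hau
      have hadj : Adj u w := Or.inr ⟨Finset.subset_insert a u, hcardw⟩
      have hlip := hf u hu w hwDN hadj
      have h1 : f u ≤ f w + 1 := by
        have := abs_le.mp hlip
        linarith [this.1]
      have hvw : (v \ w).card = n := by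
        have : v \ w = (v \ u).erase a := by
          ext b; simp [hw, Finset.mem_sdiff, Finset.mem_erase]; tauto
        rw [this, Finset.card_erase_of_mem ha, hc]; omega
      have hstep := ih w hwDN v hv hwv hvw
      have : (w.card : ℝ) = u.card + 1 := by exact_mod_cast hcardw
      linarith
  constructor
  · intro u hu v hv hadj
    rcases hadj with ⟨hvu, hcard⟩ | ⟨huv, hcard⟩
    · have hlip := hf u hu v hv (Or.inl ⟨hvu, hcard⟩)
      have h1 : f v + v.card ≤ f u + u.card := hmono 1 v hv u hu hvu (by
        rw [Finset.card_sdiff_of_subset hvu]; omega)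
      have hc : (u.card : ℝ) = v.card + 1 := by exact_mod_cast hcard
      have := abs_le.mp hlip
      rw [abs_le]
      constructor <;> simp only <;> linarith [this.1, this.2]
    · have hlip := hf u hu v hv (Or.inr ⟨huv, hcard⟩)
      have h1 : f u + u.card ≤ f v + v.card := hmono 1 u hu v hv huv (by
        rw [Finset.card_sdiff_of_subset huv]; omega)
      have hc : (v.card : ℝ) = u.card + 1 := by exact_mod_cast hcard
      have := abs_le.mp hlip
      rw [abs_le]
      constructor <;> simp only <;> linarith [this.1, this.2]
  · intro u hu v hv huv
    have := hmono (v \ u).card u hu v hv huv rfl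
    linarith
end

section
/- Interleaving property of stabilization: for neighbors v ⊂ u (u = v plus one element) and any ℓ ≤ h, stab_{ℓ,h+1} f(u) − 1 ≤ stab_{ℓ,h} f(v) ≤ stab_{ℓ,h} f(u). -/
variable {U : Type*} [DecidableEq U]

def Stable (f : Finset U → ℝ) (l : ℤ) (x : Finset U) : Prop :=
  l ≤ (x.card : ℤ) ∧ LipOn f 1 {x' | x' ⊆ x ∧ l ≤ (x'.card : ℤ)}

noncomputable def stab (f : Finset U → ℝ) (Y : Set ℝ) (l h : ℤ) (x : Finset U) : ℝ :=
  sSup ({r : ℝ | ∃ x' ⊆ x, h ≤ (x'.card : ℤ) ∧ Stable f l x' ∧ f x' = r} ∪ {sInf Y})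

lemma stabSet_finite (f : Finset U → ℝ) (Y : Set ℝ) (l h : ℤ) (x : Finset U) :
    ({r : ℝ | ∃ x' ⊆ x, h ≤ (x'.card : ℤ) ∧ Stable f l x' ∧ f x' = r} ∪ {sInf Y}).Finite := by
  apply Set.Finite.union
  · apply Set.Finite.subset (Set.Finite.image f (x.powerset : Finset (Finset U)).finite_toSet)
    rintro r ⟨x', hx', _, _, rfl⟩
    exact ⟨x', by simpa using hx', rfl⟩
  · exact Set.finite_singleton _

lemma stabSet_bdd (f : Finset U → ℝ) (Y : Set ℝ) (l h : ℤ) (x : Finset U) :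
    BddAbove ({r : ℝ | ∃ x' ⊆ x, h ≤ (x'.card : ℤ) ∧ Stable f l x' ∧ f x' = r} ∪ {sInf Y}) :=
  (stabSet_finite f Y l h x).bddAbove

lemma stabSet_nonempty (f : Finset U → ℝ) (Y : Set ℝ) (l h : ℤ) (x : Finset U) :
    ({r : ℝ | ∃ x' ⊆ x, h ≤ (x'.card : ℤ) ∧ Stable f l x' ∧ f x' = r} ∪ {sInf Y}).Nonempty :=
  ⟨sInf Y, Or.inr rfl⟩

/-- Interleaving: for neighbors `v ⊂ u` and `l ≤ h`,
`stab_{l,h+1} f u − 1 ≤ stab_{l,h} f v ≤ stab_{l,h} f u`. -/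
theorem stab_interleaving (f : Finset U → ℝ) (Y : Set ℝ) (hf : ∀ s : Finset U, f s ∈ Y)
    (l h : ℤ) (hlh : l ≤ h) (u v : Finset U)
    (hvu : v ⊆ u) (hcard : u.card = v.card + 1) :
    stab f Y l (h + 1) u - 1 ≤ stab f Y l h v ∧ stab f Y l h v ≤ stab f Y l h u := by
  constructor
  · rw [sub_le_iff_le_add]
    apply csSup_le (stabSet_nonempty f Y l (h+1) u)
    rintro r (⟨x', hx'u, hcardx', hstab, rfl⟩ | rfl)
    · -- get the extra element a
      obtain ⟨a, hav, hua⟩ : ∃ a ∉ v, u = insert a v := by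
        obtain ⟨a, hau, hav⟩ : ∃ a, a ∈ u ∧ a ∉ v := by
          by_contra hc
          push_neg at hc
          have := Finset.card_le_card hc
          omega
        refine ⟨a, hav, ?_⟩
        apply (Finset.eq_of_subset_of_card_le ?_ ?_).symm
        · intro b hb
          rcases Finset.mem_insert.mp hb with rfl | hb
          · exact hau
          · exact hvu hb
        · rw [Finset.card_insert_of_notMem hav]; omega
      by_cases hax : a ∈ x'
      · -- remove a from x'
        set x'' := x'.erase a with hx''
        have hx''sub : x'' ⊆ x' := Finset.erase_subset _ _
        have hcard'' : x''.card + 1 = x'.card := by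
          rw [hx'', Finset.card_erase_of_mem hax]
          have : 1 ≤ x'.card := Finset.card_pos.mpr ⟨a, hax⟩
          omega
        have hx''v : x'' ⊆ v := by
          intro b hb
          have hbu : b ∈ u := hx'u (hx''sub hb)
          rw [hua] at hbu
          rcases Finset.mem_insert.mp hbu with rfl | hbv
          · exact absurd hb (Finset.notMem_erase _ _)
          · exact hbv
        have hcardle : h ≤ (x''.card : ℤ) := by
          push_cast [← hcard''] at hcardx' ⊢
          omega
        have hstab'' : Stable f l x'' := by
          refine ⟨le_trans hlh hcardle, ?_⟩
          intro p hp q hq hpq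
          exact hstab.2 p ⟨hp.1.trans hx''sub, hp.2⟩ q ⟨hq.1.trans hx''sub, hq.2⟩ hpq
        have hlip : |f x' - f x''| ≤ 1 := by
          apply hstab.2 x' ⟨subset_rfl, by omega⟩ x'' ⟨hx''sub, le_trans hlh hcardle⟩
          exact Or.inl ⟨hx''sub, hcard''.symm⟩
        have hmem : f x'' ∈ ({r : ℝ | ∃ x'0 ⊆ v, h ≤ (x'0.card : ℤ) ∧ Stable f l x'0 ∧ f x'0 = r} ∪ {sInf Y}) :=
          Or.inl ⟨x'', hx''v, hcardle, hstab'', rfl⟩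
        have := le_csSup (stabSet_bdd f Y l h v) hmem
        have habs := abs_le.mp hlip
        unfold stab
        linarith [habs.1, habs.2]
      · -- x' ⊆ v already
        have hx'v : x' ⊆ v := by
          intro b hb
          have hbu := hx'u hb
          rw [hua] at hbu
          rcases Finset.mem_insert.mp hbu with rfl | hbv
          · exact absurd hb hax
          · exact hbv
        have hmem : f x' ∈ ({r : ℝ | ∃ x'0 ⊆ v, h ≤ (x'0.card : ℤ) ∧ Stable f l x'0 ∧ f x'0 = r} ∪ {sInf Y}) :=
          Or.inl ⟨x', hx'v, by omega, hstab, rfl⟩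
        have := le_csSup (stabSet_bdd f Y l h v) hmem
        unfold stab
        linarith
    · have hmem : sInf Y ∈ ({r : ℝ | ∃ x'0 ⊆ v, h ≤ (x'0.card : ℤ) ∧ Stable f l x'0 ∧ f x'0 = r} ∪ {sInf Y}) :=
        Or.inr rfl
      have := le_csSup (stabSet_bdd f Y l h v) hmem
      unfold stab
      linarith
  · apply csSup_le_csSup (stabSet_bdd f Y l h u) (stabSet_nonempty f Y l h v)
    rintro r (⟨x', hx'v, hc, hs, rfl⟩ | rfl)
    · exact Or.inl ⟨x', hx'v.trans hvu, hc, hs, rfl⟩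
    · exact Or.inr rfl
end

section
/- If f is 1-Lipschitz and monotone on DN_{|u|−ℓ}(u) and ℓ ≤ h ≤ |u|, then stab_{ℓ,h} f(u) = f(u). -/
variable {U : Type*} [DecidableEq U]

/-- If `f` is 1-Lipschitz and monotone on `DN_{|u|−l}(u)` (i.e., on subsets of `u` of
size at least `l`) and `l ≤ h ≤ |u|`, then `stab_{l,h} f u = f u`. -/
theorem stab_eq_of_lipschitz_monotone (f : Finset U → ℝ) (Y : Set ℝ)
    (hY : Y.Nonempty) (hbdd : BddBelow Y) (hf : ∀ s : Finset U, f s ∈ Y)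
    (l h : ℤ) (u : Finset U) (hlh : l ≤ h) (hhu : h ≤ (u.card : ℤ))
    (hlip : LipOn f 1 {z | z ⊆ u ∧ l ≤ (z.card : ℤ)})
    (hmono : ∀ a b : Finset U, a ∈ {z | z ⊆ u ∧ l ≤ (z.card : ℤ)} →
      b ∈ {z | z ⊆ u ∧ l ≤ (z.card : ℤ)} → a ⊆ b → f a ≤ f b) :
    stab f Y l h u = f u := by
  have hmem : f u ∈ ({r : ℝ | ∃ x' ⊆ u, h ≤ (x'.card : ℤ) ∧ Stable f l x' ∧ f x' = r} ∪ {sInf Y}) := by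
    left
    exact ⟨u, Finset.Subset.refl u, hhu, ⟨le_trans hlh hhu, hlip⟩, rfl⟩
  have hub : ∀ r ∈ ({r : ℝ | ∃ x' ⊆ u, h ≤ (x'.card : ℤ) ∧ Stable f l x' ∧ f x' = r} ∪ {sInf Y}), r ≤ f u := by
    rintro r (⟨x', hsub, hcard, _, rfl⟩ | hr)
    · exact hmono x' u ⟨hsub, le_trans hlh hcard⟩ ⟨Finset.Subset.refl u, le_trans hlh hhu⟩ hsub
    · rw [Set.mem_singleton_iff] at hr
      subst hr
      exact csInf_le hbdd (hf u)
  exact le_antisymm (csSup_le ⟨f u, hmem⟩ hub) (le_csSup ⟨f u, hub⟩ hmem)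
end

section
/- Bounded diameter of stable subsets: let v ⊂ u be neighbors with |v| ≥ ℓ and suppose m_ℓ(v) − τ > (|v| + ℓ)/2. Then for any two sets p, q each lying in StabSet_{ℓ, m_ℓ(u)−τ}(u) ∪ StabSet_{ℓ, m_ℓ(v)−τ}(v), we have |cmon f(p) − cmon f(q)| ≤ |u| − ℓ, where cmon f(x) = (f(x)+|x|)/2. -/
variable {U : Type*} [DecidableEq U]

noncomputable def maxStab (f : Finset U → ℝ) (l : ℕ) (x : Finset U) : ℕ :=
  sSup {n : ℕ | ∃ w ⊆ x, Stable f (l : ℤ) w ∧ w.card = n}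

/-- Membership in `StabSet_{l, m_l(x) − τ}(x)`. -/
def InStabSet (f : Finset U → ℝ) (l τ : ℕ) (x p : Finset U) : Prop :=
  p ⊆ x ∧ (maxStab f l x : ℤ) - τ ≤ (p.card : ℤ) ∧ Stable f (l : ℤ) p

lemma chain_bound (f : Finset U → ℝ) (l : ℤ) (x : Finset U) (hx : Stable f l x) :
    ∀ t, t ⊆ x → ∀ s, s ⊆ t → l ≤ (s.card : ℤ) →
      |f t - f s| ≤ (t.card : ℝ) - s.card := by
  intro t
  induction t using Finset.strongInduction with
  | _ t ih =>
    intro htx s hst hs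
    by_cases h : s = t
    · subst h; simp
    · obtain ⟨a, hat, has⟩ := Finset.exists_of_ssubset (hst.ssubset_of_ne h)
      set t' := t.erase a with ht'
      have ht't : t' ⊂ t := Finset.erase_ssubset hat
      have hst' : s ⊆ t' := Finset.subset_erase.mpr ⟨hst, has⟩
      have hcard : t'.card + 1 = t.card := Finset.card_erase_add_one hat
      have hlt' : l ≤ (t'.card : ℤ) :=
        le_trans hs (by exact_mod_cast Finset.card_le_card hst')
      have hlt : l ≤ (t.card : ℤ) :=
        le_trans hlt' (by exact_mod_cast Finset.card_le_card ht't.subset)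
      have hadj : Adj t t' := Or.inl ⟨ht't.subset, hcard.symm⟩
      have h1 : |f t - f t'| ≤ 1 :=
        hx.2 t ⟨htx, hlt⟩ t' ⟨ht't.subset.trans htx, hlt'⟩ hadj
      have h2 := ih t' ht't (ht't.subset.trans htx) s hst' hs
      have habs := abs_sub_le (f t) (f t') (f s)
      have hc : (t'.card : ℝ) + 1 = t.card := by exact_mod_cast hcard
      linarith
lemma cmon_bound (f : Finset U → ℝ) (l : ℤ) (x : Finset U) (hx : Stable f l x)
    (t : Finset U) (htx : t ⊆ x) (s : Finset U) (hst : s ⊆ t) (hs : l ≤ (s.card : ℤ)) :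
    |(f t + t.card) / 2 - (f s + s.card) / 2| ≤ (t.card : ℝ) - s.card := by
  have h1 := chain_bound f l x hx t htx s hst hs
  rw [abs_le] at h1 ⊢
  have h2 : (s.card : ℝ) ≤ t.card := by exact_mod_cast Finset.card_le_card hst
  constructor <;> [linarith [h1.1]; linarith [h1.2]]

/-- Bounded diameter: if `v ⊂ u` are neighbors, `|v| ≥ l` and
`m_l(v) − τ > (|v| + l)/2`, then for any `p, q` in
`StabSet_{l, m_l(u)−τ}(u) ∪ StabSet_{l, m_l(v)−τ}(v)`,
`|cmon f p − cmon f q| ≤ |u| − l` where `cmon f x = (f x + |x|)/2`. -/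
theorem stabSet_bounded_diameter (f : Finset U → ℝ) (l τ : ℕ) (u v : Finset U)
    (hvu : v ⊆ u) (hcard : u.card = v.card + 1) (hl : l ≤ v.card)
    (hgap : (v.card : ℤ) + l < 2 * ((maxStab f l v : ℤ) - τ))
    (p q : Finset U)
    (hp : InStabSet f l τ u p ∨ InStabSet f l τ v p)
    (hq : InStabSet f l τ u q ∨ InStabSet f l τ v q) :
    |(f p + p.card) / 2 - (f q + q.card) / 2| ≤ (u.card : ℝ) - l := by
  -- maxStab f l v ≤ maxStab f l u
  have hbdd : BddAbove {n : ℕ | ∃ w ⊆ u, Stable f (l : ℤ) w ∧ w.card = n} := by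
    refine ⟨u.card, fun n hn => ?_⟩
    obtain ⟨w, hw, _, rfl⟩ := hn
    exact Finset.card_le_card hw
  have hmono : maxStab f l v ≤ maxStab f l u := by
    apply csSup_le_csSup hbdd
    · -- nonempty of the v-set
      by_contra hne
      rw [Set.not_nonempty_iff_eq_empty] at hne
      have : maxStab f l v = 0 := by
        unfold maxStab; rw [hne]; exact csSup_empty
      rw [this] at hgap
      have : (0:ℤ) ≤ (v.card : ℤ) + l := by positivity
      omega
    · rintro n ⟨w, hw, hsw, rfl⟩
      exact ⟨w, hw.trans hvu, hsw, rfl⟩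
  -- uniform facts about p and q
  have key : ∀ r, (InStabSet f l τ u r ∨ InStabSet f l τ v r) →
      r ⊆ u ∧ Stable f (l : ℤ) r ∧ (maxStab f l v : ℤ) - τ ≤ (r.card : ℤ) := by
    rintro r (⟨hru, hrc, hrs⟩ | ⟨hrv, hrc, hrs⟩)
    · refine ⟨hru, hrs, le_trans ?_ hrc⟩
      have : (maxStab f l v : ℤ) ≤ maxStab f l u := by exact_mod_cast hmono
      omega
    · exact ⟨hrv.trans hvu, hrs, hrc⟩
  obtain ⟨hpu, hps, hpc⟩ := key p hp
  obtain ⟨hqu, hqs, hqc⟩ := key q hq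
  set r := p ∩ q with hr
  have hunion : (p ∪ q).card + (p ∩ q).card = p.card + q.card :=
    Finset.card_union_add_card_inter p q
  have huu : (p ∪ q).card ≤ u.card :=
    Finset.card_le_card (Finset.union_subset hpu hqu)
  have hrl : (l : ℤ) ≤ (r.card : ℤ) := by
    have h1 : ((p ∪ q).card : ℤ) + (r.card : ℤ) = p.card + q.card := by
      exact_mod_cast hunion
    have h2 : ((p ∪ q).card : ℤ) ≤ u.card := by exact_mod_cast huu
    have h3 : (u.card : ℤ) = v.card + 1 := by exact_mod_cast hcard
    omega
  have hrp : r ⊆ p := Finset.inter_subset_left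
  have hrq : r ⊆ q := Finset.inter_subset_right
  have hbp := cmon_bound f l p hps p (le_refl p) r hrp hrl
  have hbq := cmon_bound f l q hqs q (le_refl q) r hrq hrl
  have htri := abs_sub_le ((f p + p.card) / 2) ((f r + r.card) / 2) ((f q + q.card) / 2)
  rw [abs_sub_comm] at hbq
  -- final cardinality arithmetic over ℝ
  have hA : (p.card : ℝ) + q.card = (p ∪ q).card + r.card := by exact_mod_cast hunion.symm
  have hB : ((p ∪ q).card : ℝ) ≤ u.card := by exact_mod_cast huu
  have hC : (l : ℝ) ≤ r.card := by exact_mod_cast hrl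
  linarith
end

section
/- Interleaving property of offsets for monotone functions: let g : Finset U → ℝ be monotone and let x ⊂ y be neighbors (y = x plus one element). Then for any j ∈ ℕ, g_{j+1}(y) ≤ g_j(x) ≤ g_j(y), where g_j(x) = min_{z ∈ DN_j(x)} (g(z) − |z| + |x| − j). -/
variable {U : Type*} [DecidableEq U]

noncomputable def offsetFn (g : Finset U → ℝ) (j : ℕ) (x : Finset U) : ℝ :=
  sInf {r : ℝ | ∃ z ∈ DN j x, g z - z.card + x.card - j = r}

lemma offset_bdd (g : Finset U → ℝ)
    (hmono : ∀ a b : Finset U, a ⊆ b → g a ≤ g b) (j : ℕ) (x : Finset U) :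
    BddBelow {r : ℝ | ∃ z ∈ DN j x, g z - z.card + x.card - j = r} := by
  refine ⟨g ∅ - j, ?_⟩
  rintro r ⟨z, ⟨hz, _⟩, rfl⟩
  have h1 : g ∅ ≤ g z := hmono _ _ (Finset.empty_subset z)
  have h2 : (z.card : ℝ) ≤ x.card := by
    exact_mod_cast Finset.card_le_card hz
  linarith

lemma offset_nonempty (g : Finset U → ℝ) (j : ℕ) (x : Finset U) :
    Set.Nonempty {r : ℝ | ∃ z ∈ DN j x, g z - z.card + x.card - j = r} :=
  ⟨g x - x.card + x.card - j, x, ⟨subset_rfl, by simp⟩, rfl⟩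

/-- Interleaving of offsets for monotone `g`: for neighbors `x ⊂ y`,
`g_{j+1}(y) ≤ g_j(x) ≤ g_j(y)`. -/
theorem offset_interleaving (g : Finset U → ℝ)
    (hmono : ∀ a b : Finset U, a ⊆ b → g a ≤ g b)
    (x y : Finset U) (hxy : x ⊆ y) (hcard : y.card = x.card + 1) (j : ℕ) :
    offsetFn g (j + 1) y ≤ offsetFn g j x ∧ offsetFn g j x ≤ offsetFn g j y := by
  constructor
  · apply csInf_le_csInf (offset_bdd g hmono _ _) (offset_nonempty g _ _)
    rintro r ⟨z, ⟨hz, hc⟩, rfl⟩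
    refine ⟨z, ⟨hz.trans hxy, ?_⟩, ?_⟩
    · have hsub : y \ z ⊆ (x \ z) ∪ (y \ x) := by
        intro a ha
        simp only [Finset.mem_sdiff, Finset.mem_union] at ha ⊢
        by_cases hax : a ∈ x
        · exact Or.inl ⟨hax, ha.2⟩
        · exact Or.inr ⟨ha.1, hax⟩
      have h1 : (y \ z).card ≤ (x \ z).card + (y \ x).card :=
        (Finset.card_le_card hsub).trans (Finset.card_union_le _ _)
      have h2 : (y \ x).card = 1 := by
        rw [Finset.card_sdiff_of_subset hxy]; omega
      omega
    · push_cast [hcard]; ring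
  · apply le_csInf (offset_nonempty g _ _)
    rintro r ⟨z, ⟨hz, hc⟩, rfl⟩
    apply csInf_le_of_le (offset_bdd g hmono _ _)
      (⟨z ∩ x, ⟨Finset.inter_subset_right, ?_⟩, rfl⟩)
    · have h1 : g (z ∩ x) ≤ g z := hmono _ _ Finset.inter_subset_left
      have h2 : z.card ≤ (z ∩ x).card + 1 := by
        have := Finset.card_inter_add_card_sdiff z x
        have h3 : (z \ x).card ≤ (y \ x).card :=
          Finset.card_le_card (Finset.sdiff_subset_sdiff hz subset_rfl)
        have h4 : (y \ x).card = 1 := by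
          rw [Finset.card_sdiff_of_subset hxy]; omega
        omega
      have h2' : (z.card : ℝ) ≤ (z ∩ x).card + 1 := by exact_mod_cast h2
      have : (y.card : ℝ) = x.card + 1 := by exact_mod_cast hcard
      linarith
    · have : x \ (z ∩ x) ⊆ y \ z := by
        intro a ha
        simp only [Finset.mem_sdiff, Finset.mem_inter, not_and] at ha ⊢
        exact ⟨hxy ha.1, fun hz' => ha.2 hz' ha.1⟩
      calc (x \ (z ∩ x)).card ≤ (y \ z).card := Finset.card_le_card this
        _ ≤ j := hc
end

section
/- Down sensitivity of the average: if x is a multiset of n real numbers all lying in an interval of diameter σ, then for any λ < n and any submultiset z of x of size at least n − λ, |avg(x) − avg(z)| ≤ σλ/(n − λ), where avg denotes the arithmetic mean. -/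
/-- Down sensitivity of the average: if all `n` entries of `x` lie in an interval of
diameter `σ` and `z` (indexed by `s`) keeps at least `n − λ` of them (`λ < n`), then
`|avg x − avg z| ≤ σ λ / (n − λ)`. -/
theorem avg_down_sensitivity (n lam : ℕ) (hlam : lam < n) (σ : ℝ) (hσ : 0 ≤ σ)
    (x : Fin n → ℝ) (hdiam : ∀ i j : Fin n, |x i - x j| ≤ σ)
    (s : Finset (Fin n)) (hs : n - lam ≤ s.card) :
    |(∑ i, x i) / (n : ℝ) - (∑ i ∈ s, x i) / (s.card : ℝ)| ≤
      σ * (lam : ℝ) / ((n : ℝ) - (lam : ℝ)) := by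
  have hn0 : 0 < n := lt_of_le_of_lt (Nat.zero_le _) hlam
  have hm0 : 0 < s.card := lt_of_lt_of_le (Nat.sub_pos_of_lt hlam) hs
  set S : ℝ := ∑ i ∈ s, x i with hS
  set T : ℝ := ∑ i ∈ sᶜ, x i with hT
  have hsum : (∑ i, x i) = S + T := (Finset.sum_add_sum_compl s x).symm
  have hcard : s.card + sᶜ.card = n := by
    simpa using Finset.card_add_card_compl s
  set M : ℝ := (s.card : ℝ)
  set K : ℝ := (sᶜ.card : ℝ)
  have hMK : M + K = (n : ℝ) := by
    rw [← hcard]; push_cast; ring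
  have hMpos : 0 < M := Nat.cast_pos.mpr hm0
  have hNpos : (0:ℝ) < n := by exact_mod_cast hn0
  have hKle : K ≤ (lam : ℝ) := Nat.cast_le.mpr (by omega)
  have hK0 : 0 ≤ K := Nat.cast_nonneg _
  -- rewrite the difference
  have key : (∑ i, x i) / (n : ℝ) - S / M = (M * T - K * S) / ((n : ℝ) * M) := by
    rw [hsum]
    field_simp
    rw [← hMK]; ring
  -- bound the numerator
  have hnum : |M * T - K * S| ≤ K * M * σ := by
    have heq : M * T - K * S = ∑ i ∈ sᶜ, ∑ j ∈ s, (x i - x j) := by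
      simp only [Finset.sum_sub_distrib, Finset.sum_const, nsmul_eq_mul]
      rw [← Finset.mul_sum]
    rw [heq]
    calc |∑ i ∈ sᶜ, ∑ j ∈ s, (x i - x j)|
        ≤ ∑ i ∈ sᶜ, |∑ j ∈ s, (x i - x j)| := Finset.abs_sum_le_sum_abs _ _
      _ ≤ ∑ i ∈ sᶜ, ∑ j ∈ s, |x i - x j| := by
          exact Finset.sum_le_sum fun i _ => Finset.abs_sum_le_sum_abs _ _
      _ ≤ ∑ i ∈ sᶜ, ∑ j ∈ s, σ := by
          exact Finset.sum_le_sum fun i _ => Finset.sum_le_sum fun j _ => hdiam i j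
      _ = K * M * σ := by
          simp [Finset.sum_const, K, M]; ring
  rw [key]
  have hdenom : (0:ℝ) < (n : ℝ) * M := mul_pos hNpos hMpos
  rw [abs_div, abs_of_pos hdenom, div_le_div_iff₀ hdenom (by
    have : (lam : ℝ) < (n : ℝ) := by exact_mod_cast hlam
    linarith)]
  have h1 : |M * T - K * S| * ((n:ℝ) - lam) ≤ K * M * σ * ((n:ℝ) - lam) := by
    have hl : (lam : ℝ) < (n : ℝ) := by exact_mod_cast hlam
    exact mul_le_mul_of_nonneg_right hnum (by linarith)
  refine h1.trans ?_
  -- K * M * σ * (n - lam) ≤ σ * lam * (n * M)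
  have hl : (lam : ℝ) < (n : ℝ) := by exact_mod_cast hlam
  have : K * ((n:ℝ) - lam) ≤ (lam : ℝ) * (n : ℝ) := by
    have h2 : (n:ℝ) - lam ≤ (n:ℝ) := by linarith [Nat.cast_nonneg (α := ℝ) lam]
    calc K * ((n:ℝ) - lam) ≤ (lam:ℝ) * ((n:ℝ) - lam) :=
          mul_le_mul_of_nonneg_right hKle (by linarith)
      _ ≤ (lam:ℝ) * (n:ℝ) := mul_le_mul_of_nonneg_left h2 (Nat.cast_nonneg _)
  nlinarith [mul_le_mul_of_nonneg_left this (mul_nonneg hσ hMpos.le)]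
end
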